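/- Dodgson condensation computes determinants of matrices with nonzero connected minors: if A is an n × n matrix over a field such that every contiguous square submatrix (rows i..i+k, columns j..j+k) has nonzero determinant, then the iterated condensation recurrence D^{(k)}_{i,j} = (D^{(k−1)}_{i,j}·D^{(k−1)}_{i+1,j+1} − D^{(k−1)}_{i,j+1}·D^{(k−1)}_{i+1,j}) / D^{(k−2)}_{i+1,j+1} satisfies D^{(k)}_{i,j} = det of the (k+1)×(k+1) contiguous submatrix of A with top-left corner (i,j), where D^{(−1)} ≡ 1 and D^{(0)}_{i,j} = a_{i,j}. -/

import Mathlib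

/-- The Dodgson condensation array `D^(k)`, defined by the recurrence
`D^(k) i j = (D^(k-1) i j · D^(k-1) (i+1) (j+1) − D^(k-1) i (j+1) · D^(k-1) (i+1) j)
/ D^(k-2) (i+1) (j+1)`, with `D^(-1) ≡ 1` and `D^(0) i j = a i j`. -/
def condD {K : Type*} [Field K] (a : ℕ → ℕ → K) : ℕ → ℕ → ℕ → K
  | 0, i, j => a i j
  | 1, i, j => a i j * a (i + 1) (j + 1) - a i (j + 1) * a (i + 1) j
  | k + 2, i, j =>
      (condD a (k + 1) i j * condD a (k + 1) (i + 1) (j + 1) -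
        condD a (k + 1) i (j + 1) * condD a (k + 1) (i + 1) j) /
          condD a k (i + 1) (j + 1)

open Matrix Equiv Finset in
lemma det_sparse_middle {K : Type*} [Field K] {k : ℕ}
    (P : Matrix (Fin (k+2)) (Fin (k+2)) K)
    (hmid : ∀ i j : Fin (k+2), j ≠ 0 → j ≠ Fin.last (k+1) →
      P i j = if i = j then 1 else 0) :
    P.det = P 0 0 * P (Fin.last (k+1)) (Fin.last (k+1)) -
      P 0 (Fin.last (k+1)) * P (Fin.last (k+1)) 0 := by
  set l : Fin (k+2) := Fin.last (k+1) with hl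
  have h0l : (0 : Fin (k+2)) ≠ l := by
    simp [hl, Fin.ext_iff]
  have hswapne : (1 : Perm (Fin (k+2))) ≠ Equiv.swap 0 l := by
    intro hc
    have := congrFun (congrArg (fun e : Perm (Fin (k+2)) => (e : Fin (k+2) → Fin (k+2))) hc) 0
    simp [Equiv.swap_apply_left] at this
    exact h0l this
  rw [Matrix.det_apply]
  rw [← Finset.sum_subset (Finset.subset_univ ({1, Equiv.swap 0 l} : Finset (Perm (Fin (k+2)))))]
  · rw [Finset.sum_insert (by simp [hswapne]), Finset.sum_singleton]
    have hprod1 : ∏ i, P ((1 : Perm (Fin (k+2))) i) i = P 0 0 * P l l := by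
      rw [← Finset.prod_subset (Finset.subset_univ ({0, l} : Finset (Fin (k+2))))]
      · rw [Finset.prod_insert (by simp [h0l]), Finset.prod_singleton]
        simp
      · intro i _ hi
        simp only [Finset.mem_insert, Finset.mem_singleton, not_or] at hi
        simp [hmid i i hi.1 hi.2]
    have hprod2 : ∏ i, P (Equiv.swap 0 l i) i = P l 0 * P 0 l := by
      rw [← Finset.prod_subset (Finset.subset_univ ({0, l} : Finset (Fin (k+2))))]
      · rw [Finset.prod_insert (by simp [h0l]), Finset.prod_singleton]
        simp [Equiv.swap_apply_left, Equiv.swap_apply_right]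
      · intro i _ hi
        simp only [Finset.mem_insert, Finset.mem_singleton, not_or] at hi
        rw [Equiv.swap_apply_of_ne_of_ne hi.1 hi.2]
        simp [hmid i i hi.1 hi.2]
    rw [hprod1, hprod2]
    simp only [Equiv.Perm.sign_swap h0l, Perm.sign_one, one_smul, Units.neg_smul, one_smul]
    ring
  · intro σ _ hσ
    simp only [Finset.mem_insert, Finset.mem_singleton, not_or] at hσ
    by_cases hfix : ∀ j : Fin (k+2), j ≠ 0 → j ≠ l → σ j = j
    · exfalso
      have h0 : σ 0 = 0 ∨ σ 0 = l := by
        by_contra hc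
        push_neg at hc
        have h1 := hfix (σ 0) hc.1 hc.2
        exact hc.1 (σ.injective h1)
      have hlv : σ l = 0 ∨ σ l = l := by
        by_contra hc
        push_neg at hc
        have h1 := hfix (σ l) hc.1 hc.2
        exact hc.2 (σ.injective h1)
      rcases h0 with h0 | h0
      · have hll : σ l = l := by
          rcases hlv with h1 | h1
          · exact absurd (σ.injective (h1.trans h0.symm)) (Ne.symm h0l)
          · exact h1
        apply hσ.1
        ext x
        by_cases hx0 : x = 0
        · simp [hx0, h0]
        · by_cases hxl : x = l
          · simp [hxl, hll]
          · simp [hfix x hx0 hxl]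
      · have hll : σ l = 0 := by
          rcases hlv with h1 | h1
          · exact h1
          · exact absurd (σ.injective (h0.trans h1.symm)) h0l
        apply hσ.2
        ext x
        by_cases hx0 : x = 0
        · simp [hx0, h0, Equiv.swap_apply_left]
        · by_cases hxl : x = l
          · simp [hxl, hll, Equiv.swap_apply_right]
          · simp [hfix x hx0 hxl, Equiv.swap_apply_of_ne_of_ne hx0 hxl]
    · push_neg at hfix
      obtain ⟨j, hj0, hjl, hj⟩ := hfix
      have : P (σ j) j = 0 := by
        rw [hmid (σ j) j hj0 hjl, if_neg hj]
      have hz : (∏ i, P (σ i) i) = 0 :=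
        Finset.prod_eq_zero (Finset.mem_univ j) (by exact this)
      rw [hz]
      simp

open Matrix Equiv Finset in
lemma desnanot_jacobi {K : Type*} [Field K] {k : ℕ}
    (M : Matrix (Fin (k+2)) (Fin (k+2)) K) (hM : M.det ≠ 0) :
    M.det * (M.submatrix (fun t : Fin k => t.castSucc.succ)
        (fun t : Fin k => t.castSucc.succ)).det =
      (M.submatrix Fin.castSucc Fin.castSucc).det * (M.submatrix Fin.succ Fin.succ).det -
        (M.submatrix Fin.castSucc Fin.succ).det * (M.submatrix Fin.succ Fin.castSucc).det := by
  set l : Fin (k+2) := Fin.last (k+1) with hldef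
  have h0l : (0 : Fin (k+2)) ≠ l := by simp [hldef, Fin.ext_iff]
  have hl0 : l ≠ (0 : Fin (k+2)) := Ne.symm h0l
  set e0 : Fin (k+2) → K := Pi.single 0 1 with he0
  set el : Fin (k+2) → K := Pi.single l 1 with hel
  set P : Matrix (Fin (k+2)) (Fin (k+2)) K := Matrix.of fun i j =>
    if j = 0 then M.adjugate i 0 else if j = l then M.adjugate i l
    else if i = j then (1:K) else 0 with hPdef
  -- determinant of P
  have hdetP : P.det = M.adjugate 0 0 * M.adjugate l l - M.adjugate 0 l * M.adjugate l 0 := by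
    have h := det_sparse_middle P (fun i j hj0 hjl => by
      simp [hPdef, Matrix.of_apply, hldef, if_neg hj0, if_neg hjl])
    rw [h]
    simp [hPdef, Matrix.of_apply, hldef, if_neg hl0]
  -- the key product
  have hMP : M * P = (M.updateCol 0 (M.det • e0)).updateCol l (M.det • el) := by
    ext i j
    rw [Matrix.mul_apply]
    by_cases hj0 : j = 0
    · subst hj0
      have : ∑ x, M i x * P x 0 = (M * M.adjugate) i 0 := by
        rw [Matrix.mul_apply]
        refine Finset.sum_congr rfl fun x _ => ?_
        simp [hPdef]
      rw [this, Matrix.mul_adjugate]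
      simp [Matrix.updateCol_apply, h0l, he0, Pi.single_apply, Matrix.one_apply]
    · by_cases hjl : j = l
      · subst hjl
        have : ∑ x, M i x * P x l = (M * M.adjugate) i l := by
          rw [Matrix.mul_apply]
          refine Finset.sum_congr rfl fun x _ => ?_
          simp [hPdef, if_neg hl0]
        rw [this, Matrix.mul_adjugate]
        simp [Matrix.updateCol_apply, hel, Pi.single_apply, Matrix.one_apply]
      · have hterm : ∀ x, M i x * P x j = if x = j then M i x else 0 := by
          intro x
          simp only [hPdef, Matrix.of_apply, if_neg hj0, if_neg hjl]
          by_cases hx : x = j <;> simp [hx]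
        simp only [hterm]
        simp [Matrix.updateCol_apply, hj0, hjl]
  -- Q and its determinant
  set Q : Matrix (Fin (k+2)) (Fin (k+2)) K :=
    (M.updateCol 0 e0).updateCol l el with hQdef
  have hQcol0 : ∀ i, Q i 0 = if i = 0 then 1 else 0 := fun i => by
    simp [hQdef, Matrix.updateCol_apply, h0l, he0, Pi.single_apply]
  have hQcoll : ∀ i, Q i l = if i = l then 1 else 0 := fun i => by
    simp [hQdef, Matrix.updateCol_apply, hel, Pi.single_apply]
  have hQmid : ∀ i j, j ≠ 0 → j ≠ l → Q i j = M i j := fun i j hj0 hjl => by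
    simp [hQdef, Matrix.updateCol_apply, hj0, hjl]
  have hdetQ : Q.det = (M.submatrix (fun t : Fin k => t.castSucc.succ)
      (fun t : Fin k => t.castSucc.succ)).det := by
    rw [Matrix.det_succ_column_zero]
    rw [Finset.sum_eq_single 0]
    · rw [hQcol0 0, if_pos rfl]
      simp only [Fin.val_zero, pow_zero, one_mul, mul_one, Fin.succAbove_zero]
      set R : Matrix (Fin (k+1)) (Fin (k+1)) K := Q.submatrix Fin.succ Fin.succ with hRdef
      have hsucc_iff : ∀ s : Fin (k+1), s.succ = l ↔ s = Fin.last k := fun s => by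
        rw [hldef, ← Fin.succ_last, Fin.succ_inj]
      have hRcoll : ∀ s : Fin (k+1), R s (Fin.last k) = if s = Fin.last k then 1 else 0 := by
        intro s
        have : R s (Fin.last k) = Q s.succ (Fin.last k).succ := rfl
        rw [this, Fin.succ_last, ← hldef, hQcoll, if_congr (hsucc_iff s) rfl rfl]
      rw [Matrix.det_succ_column R (Fin.last k)]
      rw [Finset.sum_eq_single (Fin.last k)]
      · rw [hRcoll, if_pos rfl]
        simp only [Fin.val_last, mul_one, Fin.succAbove_last]
        rw [show ((-1 : K) ^ (k + k) = 1) from Even.neg_one_pow ⟨k, rfl⟩, one_mul]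
        congr 1
        ext u v
        have h1 : R.submatrix Fin.castSucc Fin.castSucc u v = Q u.castSucc.succ v.castSucc.succ :=
          rfl
        rw [h1, hQmid _ _ (Fin.succ_ne_zero _) (fun hc => by
          rw [hldef, ← Fin.succ_last, Fin.succ_inj] at hc
          exact (Fin.castSucc_lt_last v).ne hc)]
        rfl
      · intro s _ hs
        rw [hRcoll, if_neg hs]
        ring
      · intro hs
        exact absurd (Finset.mem_univ _) hs
    · intro i _ hi
      rw [hQcol0 i, if_neg hi]
      ring
    · intro hs
      exact absurd (Finset.mem_univ _) hs
  -- commuting the two column updates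
  have hcomm : ∀ (u v : Fin (k+2) → K),
      (M.updateCol 0 u).updateCol l v = (M.updateCol l v).updateCol 0 u := by
    intro u v
    ext i j
    by_cases hj0 : j = 0
    · subst hj0
      simp [Matrix.updateCol_apply, h0l]
    · by_cases hjl : j = l
      · subst hjl
        simp [Matrix.updateCol_apply, hl0]
      · simp [Matrix.updateCol_apply, hj0, hjl]
  -- combine
  have key : M.det * P.det = M.det * (M.det * Q.det) :=
    calc M.det * P.det
        = ((M.updateCol 0 (M.det • e0)).updateCol l (M.det • el)).det := by
          rw [← Matrix.det_mul, hMP]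
      _ = M.det * ((M.updateCol 0 (M.det • e0)).updateCol l el).det :=
          Matrix.det_updateCol_smul _ l _ _
      _ = M.det * ((M.updateCol l el).updateCol 0 (M.det • e0)).det := by rw [hcomm]
      _ = M.det * (M.det * ((M.updateCol l el).updateCol 0 e0).det) := by
          rw [Matrix.det_updateCol_smul]
      _ = M.det * (M.det * Q.det) := by rw [← hcomm]
  have hPdet2 : P.det = M.det * Q.det := mul_left_cancel₀ hM key
  -- adjugate corner entries
  have a00 : M.adjugate 0 0 = (M.submatrix Fin.succ Fin.succ).det := by
    rw [Matrix.adjugate_fin_succ_eq_det_submatrix]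
    simp
  have all : M.adjugate l l = (M.submatrix Fin.castSucc Fin.castSucc).det := by
    rw [Matrix.adjugate_fin_succ_eq_det_submatrix, hldef]
    simp only [Fin.succAbove_last, Fin.val_last]
    rw [show ((-1 : K) ^ (k + 1 + (k + 1)) = 1) from Even.neg_one_pow ⟨k + 1, rfl⟩, one_mul]
  have a0l : M.adjugate 0 l = (-1:K)^(k+1) * (M.submatrix Fin.castSucc Fin.succ).det := by
    rw [Matrix.adjugate_fin_succ_eq_det_submatrix, hldef]
    simp only [Fin.succAbove_last, Fin.succAbove_zero, Fin.val_last, Fin.val_zero, add_zero]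
  have al0 : M.adjugate l 0 = (-1:K)^(k+1) * (M.submatrix Fin.succ Fin.castSucc).det := by
    rw [Matrix.adjugate_fin_succ_eq_det_submatrix, hldef]
    simp only [Fin.succAbove_last, Fin.succAbove_zero, Fin.val_last, Fin.val_zero, zero_add]
  have hsq : ((-1:K)^(k+1)) * ((-1:K)^(k+1)) = 1 := by
    rw [← pow_add]
    exact Even.neg_one_pow ⟨k+1, rfl⟩
  rw [← hdetQ, ← hPdet2, hdetP, a00, all, a0l, al0]
  rw [mul_mul_mul_comm, hsq, one_mul]
  ring

/-- Dodgson condensation computes the determinants of all contiguous square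
submatrices, provided all of these determinants are nonzero. -/
theorem condensation_computes_det {K : Type*} [Field K] (n : ℕ) (hn : 1 ≤ n)
    (a : ℕ → ℕ → K)
    (h : ∀ k i j, i + k < n → j + k < n →
      (Matrix.of fun s t : Fin (k + 1) => a (i + s) (j + t)).det ≠ 0) :
    ∀ k i j, i + k < n → j + k < n →
      condD a k i j = (Matrix.of fun s t : Fin (k + 1) => a (i + s) (j + t)).det := by
  intro k
  induction k using Nat.strong_induction_on with
  | _ k ih =>
    obtain _ | _ | k := k
    · intro i j _ _
      simp [condD, Matrix.det_fin_one]
    · intro i j _ _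
      simp [condD, Matrix.det_fin_two]
    · intro i j hi hj
      set M : Matrix (Fin (k+3)) (Fin (k+3)) K :=
        Matrix.of fun s t : Fin (k+3) => a (i + s) (j + t) with hMdef
      have hM : M.det ≠ 0 := h (k+2) i j hi hj
      have eNW : (Matrix.of fun s t : Fin (k+2) => a (i + s) (j + t)) =
          M.submatrix Fin.castSucc Fin.castSucc := by
        ext s t
        simp [hMdef]
      have eSE : (Matrix.of fun s t : Fin (k+2) => a (i + 1 + s) (j + 1 + t)) =
          M.submatrix Fin.succ Fin.succ := by
        ext s t
        simp only [Matrix.of_apply, Matrix.submatrix_apply, hMdef, Fin.val_succ]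
        congr 1 <;> omega
      have eNE : (Matrix.of fun s t : Fin (k+2) => a (i + s) (j + 1 + t)) =
          M.submatrix Fin.castSucc Fin.succ := by
        ext s t
        simp only [Matrix.of_apply, Matrix.submatrix_apply, hMdef, Fin.val_succ,
          Fin.coe_castSucc]
        congr 1 <;> omega
      have eSW : (Matrix.of fun s t : Fin (k+2) => a (i + 1 + s) (j + t)) =
          M.submatrix Fin.succ Fin.castSucc := by
        ext s t
        simp only [Matrix.of_apply, Matrix.submatrix_apply, hMdef, Fin.val_succ,
          Fin.coe_castSucc]
        congr 1 <;> omega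
      have eI : (Matrix.of fun s t : Fin (k+1) => a (i + 1 + s) (j + 1 + t)) =
          M.submatrix (fun t : Fin (k+1) => t.castSucc.succ)
            (fun t : Fin (k+1) => t.castSucc.succ) := by
        ext s t
        simp only [Matrix.of_apply, Matrix.submatrix_apply, hMdef, Fin.val_succ,
          Fin.coe_castSucc]
        congr 1 <;> omega
      have hNW := ih (k+1) (by omega) i j (by omega) (by omega)
      have hSE := ih (k+1) (by omega) (i+1) (j+1) (by omega) (by omega)
      have hNE := ih (k+1) (by omega) i (j+1) (by omega) (by omega)
      have hSW := ih (k+1) (by omega) (i+1) j (by omega) (by omega)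
      have hI := ih k (by omega) (i+1) (j+1) (by omega) (by omega)
      have hI0 : (M.submatrix (fun t : Fin (k+1) => t.castSucc.succ)
          (fun t : Fin (k+1) => t.castSucc.succ)).det ≠ 0 := by
        rw [← eI]
        exact h k (i+1) (j+1) (by omega) (by omega)
      have hDJ := desnanot_jacobi M hM
      show (condD a (k + 1) i j * condD a (k + 1) (i + 1) (j + 1) -
          condD a (k + 1) i (j + 1) * condD a (k + 1) (i + 1) j) /
            condD a k (i + 1) (j + 1) = M.det
      rw [hNW, hSE, hNE, hSW, hI, eNW, eSE, eNE, eSW, eI, div_eq_iff hI0]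

      exact hDJ.symm
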